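/- Let 0 < c < b = √(q/θ_ig) and set x₀ = (1/c)·ln(q/(q − c²·θ_ig)). Then x₀ > 0, the function θ_c is strictly increasing on (0, x₀) and strictly decreasing on (x₀, +∞), θ_c'(x₀) = 0, and its maximum value is θ_c(x₀) = (q/c)·x₀. -/

import Mathlib

open Set Filter

noncomputable def theta (q θig c x : ℝ) : ℝ :=
  θig * Real.exp (c * x) + (q / c) * x + (q / c ^ 2) * (1 - Real.exp (c * x))

lemma theta_hasDerivAt (q θig c : ℝ) (hc : c ≠ 0) (x : ℝ) :
    HasDerivAt (theta q θig c) ((c * θig - q / c) * Real.exp (c * x) + q / c) x := by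
  have he : HasDerivAt (fun x : ℝ => Real.exp (c * x)) (Real.exp (c * x) * c) x := by
    simpa using ((hasDerivAt_id x).const_mul c).exp
  have h : HasDerivAt (theta q θig c)
      (θig * (Real.exp (c * x) * c) + (q / c * 1) + (q / c ^ 2) * (0 - Real.exp (c * x) * c)) x := by
    exact ((he.const_mul θig).add ((hasDerivAt_id x).const_mul (q / c))).add
      (((hasDerivAt_const x (1 : ℝ)).sub he).const_mul (q / c ^ 2))
  convert h using 1
  field_simp
  ring

theorem stmt4 (q θig : ℝ) (hq : 0 < q) (h1 : 0 < θig)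
    (c : ℝ) (hc0 : 0 < c) (hcb : c < Real.sqrt (q / θig))
    (x₀ : ℝ) (hx₀ : x₀ = (1 / c) * Real.log (q / (q - c ^ 2 * θig))) :
    0 < x₀ ∧
    StrictMonoOn (theta q θig c) (Ioo 0 x₀) ∧
    StrictAntiOn (theta q θig c) (Ioi x₀) ∧
    deriv (theta q θig c) x₀ = 0 ∧
    theta q θig c x₀ = (q / c) * x₀ ∧
    (∀ x : ℝ, 0 ≤ x → theta q θig c x ≤ theta q θig c x₀) := by
  have hc : c ≠ 0 := ne_of_gt hc0
  have hc2 : c ^ 2 * θig < q := by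
    have := (Real.lt_sqrt hc0.le).mp hcb
    calc c ^ 2 * θig < (q / θig) * θig := by nlinarith
      _ = q := by field_simp
  have hD : 0 < q - c ^ 2 * θig := by linarith
  have hE1 : 1 < q / (q - c ^ 2 * θig) :=
    (one_lt_div hD).mpr (sub_lt_self _ (by positivity))
  set E : ℝ := q / (q - c ^ 2 * θig) with hEdef
  have hlogpos : 0 < Real.log E := Real.log_pos hE1
  have hx0pos : 0 < x₀ := by
    rw [hx₀]; positivity
  have hcx0 : c * x₀ = Real.log E := by
    rw [hx₀]; field_simp
  have hexp : Real.exp (c * x₀) = E := by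
    rw [hcx0, Real.exp_log (by positivity)]
  have hA : c * θig - q / c < 0 := by
    rw [sub_neg]
    rw [lt_div_iff₀ hc0]
    nlinarith
  have hkey : (c * θig - q / c) * E + q / c = 0 := by
    rw [hEdef]; field_simp; ring
  -- deriv formula
  have hderiv : ∀ x, deriv (theta q θig c) x = (c * θig - q / c) * Real.exp (c * x) + q / c :=
    fun x => (theta_hasDerivAt q θig c hc x).deriv
  have hcont : Continuous (theta q θig c) :=
    continuous_iff_continuousAt.mpr fun x => (theta_hasDerivAt q θig c hc x).continuousAt
  have hpos : ∀ x < x₀, 0 < deriv (theta q θig c) x := by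
    intro x hx
    rw [hderiv]
    have : Real.exp (c * x) < E := by
      rw [← hexp]; exact Real.exp_lt_exp.mpr (by nlinarith)
    nlinarith
  have hneg : ∀ x > x₀, deriv (theta q θig c) x < 0 := by
    intro x hx
    rw [hderiv]
    have : E < Real.exp (c * x) := by
      rw [← hexp]; exact Real.exp_lt_exp.mpr (by nlinarith)
    nlinarith
  have hmono : StrictMonoOn (theta q θig c) (Icc 0 x₀) := by
    apply strictMonoOn_of_deriv_pos (convex_Icc _ _) hcont.continuousOn
    intro x hx
    rw [interior_Icc] at hx
    exact hpos x hx.2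
  have hanti : StrictAntiOn (theta q θig c) (Ici x₀) := by
    apply strictAntiOn_of_deriv_neg (convex_Ici _) hcont.continuousOn
    intro x hx
    rw [interior_Ici] at hx
    exact hneg x hx
  have hval : theta q θig c x₀ = (q / c) * x₀ := by
    unfold theta
    rw [hexp]
    have : θig * E + q / c ^ 2 * (1 - E) = 0 := by
      rw [hEdef]; field_simp; have hD' : q - θig * c ^ 2 ≠ 0 := by nlinarith
      field_simp; ring
    linarith
  refine ⟨hx0pos, ?_, hanti.mono Ioi_subset_Ici_self, ?_, hval, ?_⟩
  · exact hmono.mono (fun x hx => ⟨hx.1.le, hx.2.le⟩)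
  · rw [hderiv, hexp, hkey]
  · intro x hx
    rcases le_total x x₀ with h | h
    · rcases eq_or_lt_of_le h with h' | h'
      · rw [h']
      · exact (hmono ⟨hx, h⟩ ⟨hx0pos.le, le_rfl⟩ h').le
    · rcases eq_or_lt_of_le h with h' | h'
      · rw [h']
      · exact (hanti self_mem_Ici h h').le
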